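/- The ES flux with the Chandrashekar intermediate state has the contact property: for admissible states q⁻, q⁺ with u⁻ = u⁺ = 0, v⁻ = v⁺ = 0, and p⁻ = p⁺ = p (arbitrary densities ρ⁻, ρ⁺ > 0), the flux F^ES(q⁻, q⁺) := F*(q⁻, q⁺) − ½ Q(q_int)(r(q⁺) − r(q⁻)) equals the exact flux (0, p, 0, 0), where Q(q_int) := R |Λ|^Roe S Rᵀ with |Λ|^Roe := diag(|u−c|,|u|,|u|,|u+c|) is evaluated at the intermediate state with velocity v_int := v̄ = 0, u_int := ū = 0, pressure p_int := p̄ = p, and density ρ_int := 2 p_int β̂ (so that c_int = √(γ/(2β̂))). -/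

import Mathlib

open Real Matrix

noncomputable section

/-- A state of the 2D compressible Euler equations: `(ρ, ρu, ρv, E)`. -/
abbrev EulerState := Fin 4 → ℝ

/-- Density. -/
def rho (q : EulerState) : ℝ := q 0
/-- x-momentum. -/
def mom1 (q : EulerState) : ℝ := q 1
/-- y-momentum. -/
def mom2 (q : EulerState) : ℝ := q 2
/-- Total energy. -/
def toten (q : EulerState) : ℝ := q 3
/-- Pressure `p = (γ-1)(E - (m₁² + m₂²)/(2ρ))`. -/
def pres (γ : ℝ) (q : EulerState) : ℝ :=
  (γ - 1) * (toten q - (mom1 q ^ 2 + mom2 q ^ 2) / (2 * rho q))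
/-- x-velocity `u = m₁/ρ`. -/
def uvel (q : EulerState) : ℝ := mom1 q / rho q
/-- y-velocity `v = m₂/ρ`. -/
def vvel (q : EulerState) : ℝ := mom2 q / rho q
/-- Admissible states: positive density and positive pressure. -/
def admissible (γ : ℝ) (q : EulerState) : Prop := 0 < rho q ∧ 0 < pres γ q
/-- Physical entropy `s = ln(p ρ^(-γ))`. -/
def entS (γ : ℝ) (q : EulerState) : ℝ := Real.log (pres γ q * rho q ^ (-γ))
/-- Entropy function `U = -ρ s/(γ-1)`. -/
def entU (γ : ℝ) (q : EulerState) : ℝ := -(rho q * entS γ q) / (γ - 1)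
/-- `β = ρ/(2p)`. -/
def betaCoef (γ : ℝ) (q : EulerState) : ℝ := rho q / (2 * pres γ q)
/-- Entropy variables `r(q)`. -/
def entVar (γ : ℝ) (q : EulerState) : EulerState :=
  ![(γ - entS γ q) / (γ - 1) - betaCoef γ q * (uvel q ^ 2 + vvel q ^ 2),
    2 * betaCoef γ q * uvel q,
    2 * betaCoef γ q * vvel q,
    -2 * betaCoef γ q]
/-- x-flux `f(q)`. -/
def fFlux (γ : ℝ) (q : EulerState) : EulerState :=
  ![rho q * uvel q,
    rho q * uvel q ^ 2 + pres γ q,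
    rho q * uvel q * vvel q,
    (toten q + pres γ q) * uvel q]
/-- y-flux `g(q)`. -/
def gFlux (γ : ℝ) (q : EulerState) : EulerState :=
  ![rho q * vvel q,
    rho q * uvel q * vvel q,
    rho q * vvel q ^ 2 + pres γ q,
    (toten q + pres γ q) * vvel q]
/-- x-entropy flux `φₓ = -ρ u s/(γ-1)`. -/
def phiX (γ : ℝ) (q : EulerState) : ℝ := -(rho q * uvel q * entS γ q) / (γ - 1)
/-- y-entropy flux `φ_y = -ρ v s/(γ-1)`. -/
def phiY (γ : ℝ) (q : EulerState) : ℝ := -(rho q * vvel q * entS γ q) / (γ - 1)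

/-- Logarithmic mean `(b-a)/(ln b - ln a)`, equal to `a` when `a = b`. -/
def logMean (a b : ℝ) : ℝ := if a = b then a else (b - a) / (Real.log b - Real.log a)

/-- The entropy conservative flux of Chandrashekar. -/
def chandrashekarFlux (γ : ℝ) (qm qp : EulerState) : EulerState :=
  let ρhat := logMean (rho qm) (rho qp)
  let ubar := (uvel qm + uvel qp) / 2
  let vbar := (vvel qm + vvel qp) / 2
  let βbar := (betaCoef γ qm + betaCoef γ qp) / 2
  let βhat := logMean (betaCoef γ qm) (betaCoef γ qp)
  let ρbar := (rho qm + rho qp) / 2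
  let ptil := ρbar / (2 * βbar)
  let vsqbar := (uvel qm ^ 2 + vvel qm ^ 2 + uvel qp ^ 2 + vvel qp ^ 2) / 2
  let Fρ := ρhat * ubar
  let Fρu := ubar * Fρ + ptil
  let Fρv := vbar * Fρ
  ![Fρ, Fρu, Fρv,
    (1 / (2 * (γ - 1) * βhat) - vsqbar / 2) * Fρ + ubar * Fρu + vbar * Fρv]

/-- Speed of sound `c = √(γ p/ρ)`. -/
def cSound (γ : ℝ) (q : EulerState) : ℝ := Real.sqrt (γ * pres γ q / rho q)
/-- Enthalpy `H = c²/(γ-1) + |v|²/2`. -/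
def enthalpyH (γ : ℝ) (q : EulerState) : ℝ :=
  cSound γ q ^ 2 / (γ - 1) + (uvel q ^ 2 + vvel q ^ 2) / 2
/-- The matrix `R` of right eigenvectors of the x-flux Jacobian. -/
def eigMat (γ : ℝ) (q : EulerState) : Matrix (Fin 4) (Fin 4) ℝ :=
  !![1, 1, 0, 1;
     uvel q - cSound γ q, uvel q, 0, uvel q + cSound γ q;
     vvel q, vvel q, -1, vvel q;
     enthalpyH γ q - cSound γ q * uvel q, (uvel q ^ 2 + vvel q ^ 2) / 2, -vvel q,
       enthalpyH γ q + cSound γ q * uvel q]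
/-- Barth's scaling matrix `S = diag(ρ/(2γ), (γ-1)ρ/γ, p, ρ/(2γ))`. -/
def scalMat (γ : ℝ) (q : EulerState) : Matrix (Fin 4) (Fin 4) ℝ :=
  Matrix.diagonal ![rho q / (2 * γ), (γ - 1) * rho q / γ, pres γ q, rho q / (2 * γ)]

/-- Entropy diffusion matrix `Q = R |Λ| S Rᵀ` for a diagonal `|Λ| = diag lam`. -/
def Qmat (γ : ℝ) (lam : Fin 4 → ℝ) (q : EulerState) : Matrix (Fin 4) (Fin 4) ℝ :=
  eigMat γ q * Matrix.diagonal lam * scalMat γ q * (eigMat γ q)ᵀ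

/-- Roe eigenvalues `(|u-c|, |u|, |u|, |u+c|)`. -/
def lamRoe (γ : ℝ) (q : EulerState) : Fin 4 → ℝ :=
  ![|uvel q - cSound γ q|, |uvel q|, |uvel q|, |uvel q + cSound γ q|]
/-- Kinetic energy stable eigenvalues `(|u|+c, |u|, |u|, |u|+c)`. -/
def lamKES (γ : ℝ) (q : EulerState) : Fin 4 → ℝ :=
  ![|uvel q| + cSound γ q, |uvel q|, |uvel q|, |uvel q| + cSound γ q]
/-- Local Mach number `M = |v|/c`. -/
def machNum (γ : ℝ) (q : EulerState) : ℝ :=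
  Real.sqrt (uvel q ^ 2 + vvel q ^ 2) / cSound γ q
/-- Rescaled speed of sound `c̃ = c max(min(M,1), M_cut)`. -/
def cTilde (γ Mcut : ℝ) (q : EulerState) : ℝ :=
  cSound γ q * max (min (machNum γ q) 1) Mcut
/-- Low Mach Roe eigenvalues `(|u-c̃|, |u|, |u|, |u+c̃|)`. -/
def lamRoeLM (γ Mcut : ℝ) (q : EulerState) : Fin 4 → ℝ :=
  ![|uvel q - cTilde γ Mcut q|, |uvel q|, |uvel q|, |uvel q + cTilde γ Mcut q|]
/-- Low Mach KES eigenvalues `(|u|+c̃, |u|, |u|, |u|+c̃)`. -/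
def lamKESLM (γ Mcut : ℝ) (q : EulerState) : Fin 4 → ℝ :=
  ![|uvel q| + cTilde γ Mcut q, |uvel q|, |uvel q|, |uvel q| + cTilde γ Mcut q]

/-- the ES flux with the Chandrashekar intermediate state has the
contact property: for a stationary contact discontinuity (`u⁻ = u⁺ = v⁻ = v⁺ = 0`,
`p⁻ = p⁺`, arbitrary positive densities) the flux equals the exact flux `(0, p, 0, 0)`.
The intermediate state has `u_int = v_int = 0`, `p_int = p̄`, `ρ_int = 2 p_int β̂`
(so its conserved representation is `(ρ_int, 0, 0, p_int/(γ−1))`). -/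
lemma logMean_pos {a b : ℝ} (ha : 0 < a) (hb : 0 < b) : 0 < logMean a b := by
  unfold logMean
  split_ifs with h
  · exact ha
  · rcases lt_or_gt_of_ne h with hlt | hlt
    · exact div_pos (by linarith) (sub_pos.mpr (Real.log_lt_log ha hlt))
    · exact div_pos_of_neg_of_neg (by linarith) (sub_neg.mpr (Real.log_lt_log hb hlt))

lemma logMean_spec {a b : ℝ} (ha : 0 < a) (hb : 0 < b) :
    b - a = logMean a b * (Real.log b - Real.log a) := by
  unfold logMean
  split_ifs with h
  · simp [h]
  · have hne : Real.log b - Real.log a ≠ 0 := by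
      intro hc
      exact h (Real.log_injOn_pos (Set.mem_Ioi.mpr ha) (Set.mem_Ioi.mpr hb)
        (by linarith : Real.log a = Real.log b))
    field_simp
lemma Qw_zero (c h s1 s2 s3 s4 w1 w4 : ℝ) (hK : w1 + h * w4 = 0) :
    (!![1,1,0,1; -c,0,0,c; 0,0,-1,0; h,0,0,h] * Matrix.diagonal ![c,0,0,c] *
      Matrix.diagonal ![s1,s2,s3,s4] *
      (!![1,1,0,1; -c,0,0,c; 0,0,-1,0; h,0,0,h])ᵀ).mulVec ![w1,0,0,w4] = 0 := by
  funext i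
  fin_cases i <;>
    simp [Matrix.mulVec, Matrix.mul_apply, dotProduct, Fin.sum_univ_four,
      Matrix.diagonal_apply, Matrix.transpose_apply, Matrix.vecHead, Matrix.vecTail,
      Matrix.vecMul, Matrix.vecMul_diagonal]
  · linear_combination (c * s1 + c * s4) * hK
  · linear_combination (c * c * s4 - c * c * s1) * hK
  · linear_combination (h * c * s1 + h * c * s4) * hK
theorem es_flux_contact_property (γ : ℝ) (hγ : 1 < γ)
    (qm qp : EulerState) (hm : admissible γ qm) (hp : admissible γ qp)
    (hum : uvel qm = 0) (hup : uvel qp = 0)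
    (hvm : vvel qm = 0) (hvp : vvel qp = 0)
    (hpp : pres γ qm = pres γ qp) :
    chandrashekarFlux γ qm qp
      - (1 / 2 : ℝ) •
        (Qmat γ
          (lamRoe γ
            ![2 * ((pres γ qm + pres γ qp) / 2) * logMean (betaCoef γ qm) (betaCoef γ qp),
              0, 0, ((pres γ qm + pres γ qp) / 2) / (γ - 1)])
          ![2 * ((pres γ qm + pres γ qp) / 2) * logMean (betaCoef γ qm) (betaCoef γ qp),
            0, 0, ((pres γ qm + pres γ qp) / 2) / (γ - 1)]).mulVec
          (entVar γ qp - entVar γ qm)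
      = ![0, pres γ qm, 0, 0] := by
  obtain ⟨hρm, hPm⟩ := hm
  obtain ⟨hρp, hPp⟩ := hp
  have hγ0 : (0:ℝ) < γ := by linarith
  have hγ1 : γ - 1 ≠ 0 := by intro h; linarith
  have havg : (pres γ qm + pres γ qp) / 2 = pres γ qm := by rw [← hpp]; ring
  rw [havg]
  set P := pres γ qm with hP
  set βm := betaCoef γ qm with hβmdef
  set βp := betaCoef γ qp with hβpdef
  have hPpos : 0 < P := hPm
  have hβmv : βm = rho qm / (2 * P) := rfl
  have hβpv : βp = rho qp / (2 * P) := by rw [hβpdef, betaCoef, ← hpp]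
  have hβmpos : 0 < βm := by rw [hβmv]; positivity
  have hβppos : 0 < βp := by rw [hβpv]; positivity
  set βh := logMean βm βp with hβhdef
  have hβhpos : 0 < βh := logMean_pos hβmpos hβppos
  set L := Real.log βp - Real.log βm with hLdef
  have hβdiff : βp - βm = βh * L := logMean_spec hβmpos hβppos
  -- entropy difference
  have hlogβ : ∀ (ρ : ℝ), 0 < ρ → Real.log (ρ / (2 * P)) = Real.log ρ - Real.log (2 * P) :=
    fun ρ hρ => Real.log_div (ne_of_gt hρ) (by positivity)
  have hLρ : L = Real.log (rho qp) - Real.log (rho qm) := by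
    rw [hLdef, hβpv, hβmv, hlogβ _ hρp, hlogβ _ hρm]; ring
  have hentS : ∀ (q : EulerState), 0 < rho q → 0 < pres γ q →
      entS γ q = Real.log (pres γ q) - γ * Real.log (rho q) := by
    intro q h1 h2
    rw [entS, Real.log_mul (ne_of_gt h2) (by positivity), Real.log_rpow h1]
    ring
  have hs : entS γ qm - entS γ qp = γ * L := by
    rw [hentS qm hρm hPm, hentS qp hρp hPp, ← hpp, hLρ]; ring
  -- the vector of entropy variable differences
  have hw : entVar γ qp - entVar γ qm = ![γ * L / (γ - 1), 0, 0, -(2 * (βh * L))] := by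
    funext i
    fin_cases i <;>
      simp [entVar, hum, hup, hvm, hvp]
    · rw [div_sub_div_same, div_eq_div_iff hγ1 hγ1]
      nlinarith [hs]
    · rw [← hβpdef, ← hβmdef]
      linarith [hβdiff]
  set c := Real.sqrt (γ / (2 * βh)) with hcdef
  have hc0 : 0 ≤ c := Real.sqrt_nonneg _
  have hc2 : 2 * βh * c ^ 2 = γ := by
    rw [hcdef, Real.sq_sqrt (by positivity)]
    field_simp
  set qi : EulerState := ![2 * P * βh, 0, 0, P / (γ - 1)] with hqidef
  have hrhoi : rho qi = 2 * P * βh := by simp [rho, hqidef]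
  have hm1i : mom1 qi = 0 := by simp [mom1, hqidef]
  have hm2i : mom2 qi = 0 := by simp [mom2, hqidef]
  have htoti : toten qi = P / (γ - 1) := by simp [toten, hqidef]
  have hui : uvel qi = 0 := by rw [uvel, hm1i]; simp
  have hvi : vvel qi = 0 := by rw [vvel, hm2i]; simp
  have hpresi : pres γ qi = P := by
    rw [pres, htoti, hm1i, hm2i, hrhoi]
    field_simp
    ring
  have hci : cSound γ qi = c := by
    rw [cSound, hpresi, hrhoi, hcdef]
    congr 1
    field_simp
  have hHi : enthalpyH γ qi = c ^ 2 / (γ - 1) := by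
    rw [enthalpyH, hci, hui, hvi]; ring
  have heig : eigMat γ qi = !![1, 1, 0, 1; -c, 0, 0, c; 0, 0, -1, 0;
      c ^ 2 / (γ - 1), 0, 0, c ^ 2 / (γ - 1)] := by
    rw [eigMat, hui, hvi, hci, hHi]
    norm_num
  have hscal : scalMat γ qi =
      Matrix.diagonal ![P * βh / γ, 2 * (γ - 1) * P * βh / γ, P, P * βh / γ] := by
    rw [scalMat, hrhoi, hpresi]
    congr 1
    funext j
    fin_cases j <;> (try simp) <;> (try field_simp) <;> (try ring)
  have hlami : lamRoe γ qi = ![c, 0, 0, c] := by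
    rw [lamRoe, hui, hci]
    norm_num [abs_of_nonneg hc0]
  have hρmv : rho qm = 2 * P * βm := by rw [hβmv]; field_simp
  have hρpv : rho qp = 2 * P * βp := by rw [hβpv]; field_simp
  have hK : γ * L / (γ - 1) + c ^ 2 / (γ - 1) * -(2 * (βh * L)) = 0 := by
    field_simp
    linear_combination (Real.log βm - Real.log βp) * hc2
  rw [hw, Qmat, heig, hscal, hlami,
    Qw_zero c (c ^ 2 / (γ - 1)) (P * βh / γ) (2 * (γ - 1) * P * βh / γ) P (P * βh / γ)
      (γ * L / (γ - 1)) (-(2 * (βh * L))) hK]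
  funext i
  fin_cases i <;>
    simp [chandrashekarFlux, hum, hup, hvm, hvp, hρmv, hρpv, ← hβmdef, ← hβpdef]
  have hβsum : βm + βp ≠ 0 := by positivity
  rw [div_eq_iff (by positivity : (2 : ℝ) * ((βm + βp) / 2) ≠ 0)]
  ring
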